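/- Let σ be a full-dimensional simplicial rational cone in N_ℝ with N ≅ ℤ^d, M = Hom(N, ℤ), P = σ^∨ ∩ M, and let S be the submonoid of σ ∩ N generated by the first lattice points of the rays of σ. Let F = { h ∈ M ⊗ ℚ : ⟨h, s⟩ ∈ ℤ_{≥0} for all s ∈ S }. Then the inclusion i : P → F is a minimal free resolution of P: for any injective monoid homomorphism j : P → G with G ≅ ℕ^d whose image is close to G, there exists a unique monoid homomorphism φ : F → G with j = φ ∘ i. -/

import Mathlib

private lemma stmt6_den_clear {d : ℕ} (v : Fin d → ℚ) :
    ∃ N : ℕ, 0 < N ∧ ∃ w : Fin d → ℤ, ∀ jj, (N : ℚ) * v jj = w jj := by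
  refine ⟨∏ i, (v i).den, Finset.prod_pos (fun i _ => (v i).pos), ?_⟩
  refine ⟨fun jj => ((∏ i, (v i).den) / (v jj).den : ℕ) * (v jj).num, fun jj => ?_⟩
  show ((∏ i, (v i).den : ℕ) : ℚ) * v jj = (((∏ i, (v i).den) / (v jj).den : ℕ) * (v jj).num : ℤ)
  obtain ⟨t, ht⟩ := Finset.dvd_prod_of_mem (fun i => (v i).den) (Finset.mem_univ jj)
  rw [ht, Nat.mul_div_cancel_left _ (v jj).pos]
  have hden : ((v jj).den : ℚ) * v jj = (v jj).num := by
    rw [mul_comm]; exact_mod_cast (v jj).mul_den_eq_num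
  push_cast
  rw [mul_comm ((v jj).den : ℚ) (t : ℚ), mul_assoc, hden]

private lemma stmt6_den_clear_family {d : ℕ} (f : Fin d → (Fin d → ℚ)) :
    ∃ N : ℕ, 0 < N ∧ ∃ w : Fin d → Fin d → ℤ, ∀ k jj, (N : ℚ) * f k jj = w k jj := by
  choose Nk hNk wk hwk using fun k => stmt6_den_clear (f k)
  refine ⟨∏ k, Nk k, Finset.prod_pos (fun k _ => hNk k), ?_⟩
  refine ⟨fun k jj => ((∏ i, Nk i) / Nk k : ℕ) * wk k jj, fun k jj => ?_⟩
  show ((∏ i, Nk i : ℕ) : ℚ) * f k jj = (((∏ i, Nk i) / Nk k : ℕ) * wk k jj : ℤ)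
  obtain ⟨t, ht⟩ := Finset.dvd_prod_of_mem Nk (Finset.mem_univ k)
  rw [ht, Nat.mul_div_cancel_left _ (hNk k)]
  push_cast
  rw [mul_comm ((Nk k : ℚ)) (t:ℚ), mul_assoc, hwk k jj]

private lemma stmt6_bezout {d : ℕ} (v : Fin d → ℤ)
    (hv : ∀ (g : Fin d → ℤ) (n : ℕ), v = n • g → n = 1) :
    ∃ c : Fin d → ℤ, ∑ jj, c jj * v jj = 1 := by
  obtain ⟨a, ha⟩ := Submodule.IsPrincipal.principal (Ideal.span (Set.range v))
  have ha' : Ideal.span (Set.range v) = Ideal.span {a} := ha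
  have hdvd : ∀ jj, a ∣ v jj := fun jj =>
    Ideal.mem_span_singleton.mp (ha' ▸ Ideal.subset_span ⟨jj, rfl⟩)
  have hsmul : v = a.natAbs • (fun jj => v jj / (a.natAbs : ℤ)) := by
    funext jj
    have h1 : ((a.natAbs : ℤ)) ∣ v jj := Int.natAbs_dvd.mpr (hdvd jj)
    have h2 : a.natAbs • (v jj / (a.natAbs : ℤ)) = (a.natAbs : ℤ) * (v jj / (a.natAbs : ℤ)) := by
      simp [nsmul_eq_mul]
    simp only [Pi.smul_apply, h2, Int.mul_ediv_cancel' h1]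
  have hu : IsUnit a := Int.isUnit_iff_natAbs_eq.mpr (hv _ _ hsmul)
  have h1 : (1 : ℤ) ∈ Ideal.span (Set.range v) := by
    rw [ha', Ideal.span_singleton_eq_top.mpr hu]; trivial
  obtain ⟨c, hc⟩ := (Submodule.mem_span_range_iff_exists_fun ℤ).mp h1
  exact ⟨c, by simpa [smul_eq_mul] using hc⟩

private def stmt6A {d : ℕ} (ζ : Fin d → (Fin d → ℤ)) : (Fin d → ℚ) →ₗ[ℚ] (Fin d → ℚ) where
  toFun h := fun i => ∑ jj, h jj * (ζ i jj : ℚ)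
  map_add' x y := by funext i; simp [add_mul, Finset.sum_add_distrib]
  map_smul' c x := by funext i; simp [Finset.mul_sum, mul_assoc]

private lemma stmt6A_apply {d : ℕ} (ζ : Fin d → (Fin d → ℤ)) (h : Fin d → ℚ) (i : Fin d) :
    stmt6A ζ h i = ∑ jj, h jj * (ζ i jj : ℚ) := rfl

private lemma stmt6A_inj {d : ℕ} (ζ : Fin d → (Fin d → ℤ)) [Nonempty (Fin d)]
    (hlin : LinearIndependent ℚ fun i => fun j => (ζ i j : ℚ)) :
    Function.Injective (stmt6A ζ) := by
  have hcard : Fintype.card (Fin d) = Module.finrank ℚ (Fin d → ℚ) := by simp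
  have hspan : Submodule.span ℚ (Set.range fun i => fun j => ((ζ i j : ℚ))) = ⊤ := by
    have := (basisOfLinearIndependentOfCardEqFinrank hlin hcard).span_eq
    rwa [coe_basisOfLinearIndependentOfCardEqFinrank] at this
  have hker : ∀ h, stmt6A ζ h = 0 → h = 0 := by
    intro h hh
    obtain ⟨c, hc⟩ := (Submodule.mem_span_range_iff_exists_fun ℚ).mp
      (hspan ▸ Submodule.mem_top (x := h))
    have hsq : ∑ jj, h jj * h jj = 0 := by
      have step1 : ∑ jj, h jj * h jj = ∑ jj, h jj * (∑ i, c i * (ζ i jj : ℚ)) := by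
        refine Finset.sum_congr rfl fun jj _ => ?_
        congr 1
        conv_lhs => rw [← hc]
        simp [Finset.sum_apply]
      rw [step1]
      simp_rw [Finset.mul_sum]
      rw [Finset.sum_comm]
      have step2 : ∀ i, ∑ jj, h jj * (c i * (ζ i jj : ℚ)) = c i * stmt6A ζ h i := by
        intro i
        rw [stmt6A_apply, Finset.mul_sum]
        exact Finset.sum_congr rfl fun jj _ => by ring
      simp_rw [step2, hh]
      simp
    funext jj
    have := (Finset.sum_eq_zero_iff_of_nonneg
      (fun jj _ => mul_self_nonneg (h jj))).mp hsq jj (Finset.mem_univ jj)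
    exact mul_self_eq_zero.mp this
  intro x y hxy
  have : stmt6A ζ (x - y) = 0 := by rw [map_sub, hxy, sub_self]
  exact sub_eq_zero.mp (hker _ this)

/-- With `σ` full-dimensional simplicial with primitive ray
generators `ζ i`, `P = σ^∨ ∩ M` and
`F = { h ∈ M ⊗ ℚ : ⟨h, s⟩ ∈ ℤ_{≥0} ∀ s ∈ S }` (`S` generated by the `ζ i`),
the inclusion `i : P → F` is a minimal free resolution: for any injective
monoid homomorphism `j : P → G` with `G ≅ ℕ^d` and image close to `G`, there
is a unique homomorphism `φ : F → G` with `j = φ ∘ i`. -/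
theorem stmt6 {d : ℕ} (ζ : Fin d → (Fin d → ℤ))
    (hprim : ∀ (i : Fin d) (g : Fin d → ℤ) (n : ℕ), ζ i = n • g → n = 1)
    (hlin : LinearIndependent ℚ fun i => fun j => (ζ i j : ℚ))
    (P F : AddSubmonoid (Fin d → ℚ))
    (hP : ∀ h : Fin d → ℚ, h ∈ P ↔
      ((∃ m : Fin d → ℤ, ∀ j, h j = (m j : ℚ)) ∧ ∀ i, 0 ≤ ∑ j, h j * (ζ i j : ℚ)))
    (hF : ∀ h : Fin d → ℚ, h ∈ F ↔
      ∀ s ∈ AddSubmonoid.closure (Set.range ζ),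
        ∃ k : ℕ, ∑ j, h j * (s j : ℚ) = (k : ℚ))
    (hPF : P ≤ F)
    (G : Type*) [AddCommMonoid G] (eG : G ≃+ (Fin d → ℕ))
    (j : P →+ G) (hj : Function.Injective j)
    (hclose : ∀ g : G, ∃ n : ℕ, 0 < n ∧ ∃ p : P, n • g = j p) :
    ∃! φ : F →+ G, ∀ p : P, φ (AddSubmonoid.inclusion hPF p) = j p := by
  classical
  rcases Nat.eq_zero_or_pos d with hd | hd
  · -- degenerate case d = 0
    haveI : IsEmpty (Fin d) := ⟨fun i => absurd i.2 (by omega)⟩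
    haveI : Subsingleton G := eG.toEquiv.subsingleton
    refine ⟨0, fun p => Subsingleton.elim _ _, fun ψ _ => ?_⟩
    ext ff
    exact Subsingleton.elim _ _
  haveI : Nonempty (Fin d) := ⟨⟨0, hd⟩⟩
  set ι : P →+ F := AddSubmonoid.inclusion hPF with hι
  set A := stmt6A ζ with hA
  have hAinj : Function.Injective A := stmt6A_inj ζ hlin
  have hAsurj : Function.Surjective A := LinearMap.injective_iff_surjective.mp hAinj
  choose f hf using fun k => hAsurj (Pi.single k 1)
  have hfk : ∀ k i, ∑ jj, f k jj * (ζ i jj : ℚ) = if i = k then 1 else 0 := by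
    intro k i
    have := congrFun (hf k) i
    rw [stmt6A_apply] at this
    simpa [Pi.single_apply] using this
  -- cancellation of positive nat scalars in G
  have hcanc : ∀ (n : ℕ), 0 < n → ∀ g g' : G, n • g = n • g' → g = g' := by
    intro n hn g g' h
    apply eG.injective
    have h2 := congrArg eG h
    rw [map_nsmul, map_nsmul] at h2
    funext m
    have h3 := congrFun h2 m
    simp only [Pi.smul_apply, smul_eq_mul] at h3
    exact Nat.eq_of_mul_eq_mul_left hn h3
  -- clear denominators of the dual basis
  obtain ⟨N, hN, wf, hwf⟩ := stmt6_den_clear_family f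
  have hpkmem : ∀ k, (fun jj => (N : ℚ) * f k jj) ∈ P := by
    intro k
    rw [hP]
    constructor
    · exact ⟨wf k, fun jj => hwf k jj⟩
    · intro i
      have : ∑ jj, ((N : ℚ) * f k jj) * (ζ i jj : ℚ)
          = (N : ℚ) * ∑ jj, f k jj * (ζ i jj : ℚ) := by
        rw [Finset.mul_sum]; exact Finset.sum_congr rfl fun jj _ => by ring
      rw [this, hfk]
      split_ifs <;> positivity
  set pk : Fin d → P := fun k => ⟨fun jj => (N : ℚ) * f k jj, hpkmem k⟩ with hpk
  -- the coordinate functions on F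
  have hmemF : ∀ (x : F) (k : Fin d),
      ∃ n : ℕ, ∑ jj, (x : Fin d → ℚ) jj * ((ζ k) jj : ℚ) = (n : ℚ) :=
    fun x k => (hF _).mp x.2 (ζ k) (AddSubmonoid.subset_closure ⟨k, rfl⟩)
  choose ν hν using hmemF
  have hιco : ∀ p : P, ((ι p : F) : Fin d → ℚ) = (p : Fin d → ℚ) := fun p => rfl
  -- key linearity relation
  have hpkco : ∀ k, ((pk k : P) : Fin d → ℚ) = fun jj => (N : ℚ) * f k jj := fun k => rfl
  have hAν : ∀ x : F, stmt6A ζ (x : Fin d → ℚ) = fun i => (ν x i : ℚ) := by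
    intro x; funext i; rw [stmt6A_apply]; exact hν x i
  have hApk : ∀ k, stmt6A ζ ((pk k : P) : Fin d → ℚ)
      = fun i => if i = k then (N : ℚ) else 0 := by
    intro k; funext i
    rw [hpkco, stmt6A_apply]
    have h1 : ∑ jj, ((N : ℚ) * f k jj) * (ζ i jj : ℚ)
        = (N : ℚ) * ∑ jj, f k jj * (ζ i jj : ℚ) := by
      rw [Finset.mul_sum]; exact Finset.sum_congr rfl fun jj _ => by ring
    rw [h1, hfk]
    split_ifs <;> simp
  have hqid : ∀ p : P, N • (p : Fin d → ℚ)
      = ∑ k, (ν (ι p) k) • ((pk k : P) : Fin d → ℚ) := by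
    intro p
    apply hAinj
    rw [map_nsmul, map_sum]
    funext i
    rw [Finset.sum_apply, Pi.smul_apply]
    have h2 : ∀ k, (stmt6A ζ ((ν (ι p) k) • ((pk k : P) : Fin d → ℚ))) i
        = (ν (ι p) k : ℚ) * (if i = k then (N : ℚ) else 0) := by
      intro k
      rw [map_nsmul, Pi.smul_apply, hApk]
      simp [nsmul_eq_mul]
    simp_rw [hA, h2]
    rw [show (stmt6A ζ) ((p : Fin d → ℚ)) i = ((ν (ι p) i : ℕ) : ℚ) from congrFun (hAν (ι p)) i]
    simp only [mul_ite, mul_zero, Finset.sum_ite_eq, Finset.mem_univ, if_true]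
    simp [nsmul_eq_mul, mul_comm]
  have key : ∀ p : P, N • (j p) = ∑ k, ν (ι p) k • (j (pk k)) := by
    intro p
    have hPeq : (N • p : P) = ∑ k, ν (ι p) k • pk k := by
      apply Subtype.ext
      have hco1 : ((N • p : P) : Fin d → ℚ) = N • (p : Fin d → ℚ) := by push_cast; rfl
      have hco2 : ((∑ k, ν (ι p) k • pk k : P) : Fin d → ℚ)
          = ∑ k, (ν (ι p) k) • ((pk k : P) : Fin d → ℚ) := by push_cast; rfl
      rw [hco1, hco2]
      exact hqid p
    calc N • (j p) = j (N • p) := (map_nsmul j N p).symm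
      _ = j (∑ k, ν (ι p) k • pk k) := by rw [hPeq]
      _ = ∑ k, ν (ι p) k • (j (pk k)) := by rw [map_sum]; exact Finset.sum_congr rfl fun k _ => map_nsmul j _ _
  -- coordinates in G
  set c : Fin d → Fin d → ℕ := fun k m => eG (j (pk k)) m with hc
  have star : ∀ (p : P) (m : Fin d),
      N * (eG (j p) m) = ∑ k, ν (ι p) k * c k m := by
    intro p m
    have h1 := congrArg eG (key p)
    rw [map_nsmul, map_sum] at h1
    have h2 := congrFun h1 m
    rw [Finset.sum_apply, Pi.smul_apply, smul_eq_mul] at h2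
    rw [h2]
    refine Finset.sum_congr rfl fun k _ => ?_
    rw [map_nsmul, Pi.smul_apply, smul_eq_mul, hc]
  -- closeness: each basis vector of G has a multiple hit from P
  have hCL : ∀ m : Fin d, ∃ (n : ℕ) (q : P), 0 < n ∧
      ∀ m', eG (j q) m' = if m' = m then n else 0 := by
    intro m
    obtain ⟨n, hn, q, hq⟩ := hclose (eG.symm (Pi.single m 1))
    refine ⟨n, q, hn, fun m' => ?_⟩
    have h1 : eG (j q) = n • Pi.single m 1 := by
      rw [← hq, map_nsmul, AddEquiv.apply_symm_apply]
    rw [h1]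
    simp [Pi.single_apply, mul_ite]
  choose nn qq hnn hqq using hCL
  have hQ : ∀ m m', ∑ k, ν (ι (qq m)) k * c k m' = if m' = m then N * nn m else 0 := by
    intro m m'
    rw [← star, hqq m m']
    split_ifs <;> simp
  have hex : ∀ m, ∃ k, ν (ι (qq m)) k ≠ 0 ∧ c k m ≠ 0 := by
    intro m
    have h0 : ∑ k, ν (ι (qq m)) k * c k m ≠ 0 := by
      rw [hQ m m]
      simp only [if_true]
      exact Nat.mul_ne_zero hN.ne' (hnn m).ne'
    obtain ⟨k, -, hk⟩ := Finset.exists_ne_zero_of_sum_ne_zero h0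
    exact ⟨k, (Nat.mul_ne_zero_iff.mp hk).1, (Nat.mul_ne_zero_iff.mp hk).2⟩
  choose km hkm1 hkm2 using hex
  have hzero : ∀ m m', m' ≠ m → c (km m) m' = 0 := by
    intro m m' hne
    have h0 : ∑ k, ν (ι (qq m)) k * c k m' = 0 := by rw [hQ]; simp [hne]
    have := (Finset.sum_eq_zero_iff.mp h0) (km m) (Finset.mem_univ _)
    exact (Nat.mul_eq_zero.mp this).resolve_left (hkm1 m)
  have hkminj : Function.Injective km := by
    intro m1 m2 h12
    by_contra hne
    have h1 : c (km m1) m1 ≠ 0 := hkm2 m1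
    have h2 : c (km m2) m1 = 0 := hzero m2 m1 (fun h => hne h)
    rw [h12] at h1
    exact h1 h2
  let κ : Fin d ≃ Fin d := Equiv.ofBijective km (Finite.injective_iff_bijective.mp hkminj)
  set mk : Fin d → Fin d := fun k => κ.symm k with hmkdef
  have hmk : ∀ k, km (mk k) = k := fun k => κ.apply_symm_apply k
  have hmkinj : Function.Injective mk := fun a b h => κ.symm.injective h
  have hcz : ∀ k m', m' ≠ mk k → c k m' = 0 := by
    intro k m' h
    have := hzero (mk k) m' h
    rwa [hmk] at this
  have hcpos : ∀ k, c k (mk k) ≠ 0 := fun k => by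
    have := hkm2 (mk k); rwa [hmk] at this
  -- an interior element of P
  set uP : P := ∑ k, pk k with huP
  have huco : ((uP : P) : Fin d → ℚ) = fun jj => ∑ k, (N : ℚ) * f k jj := by
    rw [huP]
    push_cast
    funext jj
    rw [Finset.sum_apply]
  have hupair : ∀ i, ∑ jj, ((uP : P) : Fin d → ℚ) jj * (ζ i jj : ℚ) = (N : ℚ) := by
    intro i
    rw [huco]
    simp_rw [Finset.sum_mul]
    rw [Finset.sum_comm]
    have h3 : ∀ k, ∑ jj, ((N : ℚ) * f k jj) * (ζ i jj : ℚ)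
        = (N : ℚ) * (if i = k then (1:ℚ) else 0) := by
      intro k
      rw [← hfk k i, Finset.mul_sum]
      exact Finset.sum_congr rfl fun jj _ => by ring
    simp_rw [h3]
    simp [mul_ite, Finset.sum_ite_eq]
  have huint : ∀ jj, ((uP : P) : Fin d → ℚ) jj = ((∑ k, wf k jj : ℤ) : ℚ) := by
    intro jj
    rw [huco]
    push_cast
    exact Finset.sum_congr rfl fun k _ => hwf k jj
  -- every integer vector is a difference of two elements of P
  have split : ∀ w : Fin d → ℤ, ∃ (pp qq2 : P),
      ∀ jj, ((pp : P) : Fin d → ℚ) jj = ((qq2 : P) : Fin d → ℚ) jj + (w jj : ℚ) := by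
    intro w
    set pw : Fin d → ℤ := fun i => ∑ jj, w jj * ζ i jj with hpw
    set T : ℕ := ∑ i, (pw i).natAbs with hT
    have hTco : ((T • uP : P) : Fin d → ℚ) = fun jj => (T : ℚ) * ((uP : P) : Fin d → ℚ) jj := by
      push_cast
      funext jj
      simp [nsmul_eq_mul]
    have hpair : ∀ i, ∑ jj, (((T • uP : P) : Fin d → ℚ) jj + (w jj : ℚ)) * (ζ i jj : ℚ)
        = (T : ℚ) * (N : ℚ) + ((pw i : ℤ) : ℚ) := by
      intro i
      have expand : ∀ jj, (((T • uP : P) : Fin d → ℚ) jj + (w jj : ℚ)) * (ζ i jj : ℚ)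
          = (T:ℚ) * (((uP : P) : Fin d → ℚ) jj * (ζ i jj : ℚ)) + (w jj : ℚ) * (ζ i jj : ℚ) := by
        intro jj
        rw [hTco]
        ring
      simp_rw [expand]
      rw [Finset.sum_add_distrib, ← Finset.mul_sum, hupair i]
      congr 1
      rw [hpw]
      push_cast
      rfl
    have hpmem : (fun jj => ((T • uP : P) : Fin d → ℚ) jj + (w jj : ℚ)) ∈ P := by
      rw [hP]
      refine ⟨⟨fun jj => T * (∑ k, wf k jj) + w jj, fun jj => ?_⟩, fun i => ?_⟩
      · rw [hTco]
        push_cast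
        rw [huint jj]
        push_cast
        ring
      · rw [hpair i]
        have h1 : (pw i).natAbs ≤ T := by
          rw [hT]
          exact Finset.single_le_sum (f := fun i => (pw i).natAbs)
            (fun i _ => Nat.zero_le _) (Finset.mem_univ i)
        have h2 : (0:ℤ) ≤ (T:ℤ) * N + pw i := by
          have h3 : -(pw i) ≤ ((pw i).natAbs : ℤ) := by
            rcases Int.natAbs_eq (pw i) with h | h <;> omega
          have h4 : ((pw i).natAbs : ℤ) ≤ T := by exact_mod_cast h1
          have h5 : (1:ℤ) ≤ N := by exact_mod_cast hN
          nlinarith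
        exact_mod_cast h2
    exact ⟨⟨_, hpmem⟩, T • uP, fun jj => rfl⟩
  -- integrality: N divides the diagonal entries
  have hdvd : ∀ k, ∃ γ : ℕ, c k (mk k) = N * γ := by
    intro k
    obtain ⟨w, hw⟩ := stmt6_bezout (ζ k) (fun g n h => hprim k g n h)
    obtain ⟨pp, qq2, hpq⟩ := split w
    have hνrel : (ν (ι pp) k : ℤ) = (ν (ι qq2) k : ℤ) + 1 := by
      have hq1 : (ν (ι pp) k : ℚ) = (ν (ι qq2) k : ℚ) + 1 := by
        rw [← hν (ι pp) k, ← hν (ι qq2) k]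
        have hterm : ∀ jj, ((ι pp : F) : Fin d → ℚ) jj * (ζ k jj : ℚ)
            = ((ι qq2 : F) : Fin d → ℚ) jj * (ζ k jj : ℚ) + (w jj : ℚ) * (ζ k jj : ℚ) := by
          intro jj
          rw [hιco pp, hιco qq2, hpq jj]
          ring
        simp_rw [hterm]
        rw [Finset.sum_add_distrib]
        congr 1
        have hsw : ∑ jj, (w jj : ℚ) * (ζ k jj : ℚ) = ((1:ℤ):ℚ) := by
          rw [← hw]; push_cast; rfl
        rw [hsw]; norm_num
      exact_mod_cast hq1
    have hsump : ∀ (r : P), ∑ k', ν (ι r) k' * c k' (mk k) = ν (ι r) k * c k (mk k) := by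
      intro r
      rw [Finset.sum_eq_single k]
      · intro k' _ hk'
        rw [hcz k' (mk k) (fun h => hk' (hmkinj h).symm)]
        ring
      · intro h; exact absurd (Finset.mem_univ k) h
    have hp1 := star pp (mk k)
    have hp2 := star qq2 (mk k)
    rw [hsump] at hp1 hp2
    have hz1 : (N:ℤ) * (eG (j pp) (mk k) : ℕ) = (ν (ι pp) k : ℤ) * c k (mk k) := by
      exact_mod_cast hp1
    have hz2 : (N:ℤ) * (eG (j qq2) (mk k) : ℕ) = (ν (ι qq2) k : ℤ) * c k (mk k) := by
      exact_mod_cast hp2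
    have hceq : (c k (mk k) : ℤ)
        = (N:ℤ) * ((eG (j pp) (mk k) : ℤ) - (eG (j qq2) (mk k) : ℤ)) := by
      rw [mul_sub]
      rw [hνrel, add_mul, one_mul] at hz1
      linarith [hz1, hz2]
    have ht : (0:ℤ) ≤ (eG (j pp) (mk k) : ℤ) - (eG (j qq2) (mk k) : ℤ) := by
      by_contra h
      push_neg at h
      have hNz : (0:ℤ) < (N:ℤ) := by exact_mod_cast hN
      nlinarith [hceq, Int.natCast_nonneg (c k (mk k))]
    refine ⟨((eG (j pp) (mk k) : ℤ) - (eG (j qq2) (mk k) : ℤ)).toNat, ?_⟩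
    have h7 : ((c k (mk k) : ℕ) : ℤ)
        = (N:ℤ) * ((((eG (j pp) (mk k) : ℤ) - (eG (j qq2) (mk k) : ℤ)).toNat : ℤ)) := by
      rw [Int.toNat_of_nonneg ht]
      exact hceq
    exact_mod_cast h7
  choose γ hγ using hdvd
  -- the images of the free generators
  set gk : Fin d → G := fun k => eG.symm (Pi.single (mk k) (γ k)) with hgkdef
  have hck : ∀ k m', eG (j (pk k)) m' = c k m' := fun _ _ => rfl
  have hgk : ∀ k, N • gk k = j (pk k) := by
    intro k
    apply eG.injective
    rw [map_nsmul, AddEquiv.apply_symm_apply]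
    funext m'
    rw [Pi.smul_apply, smul_eq_mul, Pi.single_apply, hck]
    by_cases hm : m' = mk k
    · subst hm
      rw [if_pos rfl]
      exact (hγ k).symm
    · rw [if_neg hm, mul_zero]
      exact (hcz k m' hm).symm
  have hν0 : ∀ k, ν 0 k = 0 := by
    intro k
    have h0 : ((ν 0 k : ℕ) : ℚ) = 0 := by
      rw [← hν 0 k]
      have : ((0 : F) : Fin d → ℚ) = 0 := rfl
      rw [this]
      simp
    exact_mod_cast h0
  have hνadd : ∀ (x y : F) k, ν (x + y) k = ν x k + ν y k := by
    intro x y k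
    have h0 : ((ν (x + y) k : ℕ) : ℚ) = ((ν x k : ℕ) : ℚ) + ((ν y k : ℕ) : ℚ) := by
      rw [← hν, ← hν, ← hν]
      have hco : ((x + y : F) : Fin d → ℚ) = (x : Fin d → ℚ) + (y : Fin d → ℚ) := rfl
      rw [hco, ← Finset.sum_add_distrib]
      exact Finset.sum_congr rfl fun jj _ => by rw [Pi.add_apply]; ring
    exact_mod_cast h0
  set Φ : F →+ G :=
    { toFun := fun ff => ∑ k, ν ff k • gk k
      map_zero' := by simp [hν0]
      map_add' := by
        intro x y
        simp only [hνadd, add_nsmul]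
        rw [Finset.sum_add_distrib] } with hΦ
  have hΦapp : ∀ ff : F, Φ ff = ∑ k, ν ff k • gk k := fun ff => rfl
  have hspec : ∀ p : P, Φ (ι p) = j p := by
    intro p
    apply hcanc N hN
    rw [hΦapp, Finset.smul_sum]
    have hstep : ∀ k, N • (ν (ι p) k • gk k) = ν (ι p) k • (j (pk k)) := by
      intro k
      rw [smul_comm, hgk]
    simp_rw [hstep]
    exact (key p).symm
  refine ⟨Φ, hspec, ?_⟩
  intro Ψ hΨ
  ext ff
  obtain ⟨M, hM, wm, hwm⟩ := stmt6_den_clear (ff : Fin d → ℚ)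
  have hmemP : (fun jj => (M : ℚ) * (ff : Fin d → ℚ) jj) ∈ P := by
    rw [hP]
    refine ⟨⟨wm, fun jj => hwm jj⟩, fun i => ?_⟩
    have h1 : ∑ jj, ((M:ℚ) * (ff : Fin d → ℚ) jj) * (ζ i jj : ℚ)
        = (M:ℚ) * ((ν ff i : ℕ) : ℚ) := by
      rw [← hν ff i, Finset.mul_sum]
      exact Finset.sum_congr rfl fun jj _ => by ring
    rw [h1]
    positivity
  have hιp : ι (⟨_, hmemP⟩ : P) = M • ff := by
    apply Subtype.ext
    have hco : ((M • ff : F) : Fin d → ℚ) = fun jj => (M:ℚ) * (ff : Fin d → ℚ) jj := by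
      push_cast
      funext jj
      simp [nsmul_eq_mul]
    rw [hco]
    rfl
  have e1 : M • Ψ ff = M • Φ ff := by
    calc M • Ψ ff = Ψ (M • ff) := (map_nsmul Ψ M ff).symm
      _ = Ψ (ι ⟨_, hmemP⟩) := by rw [hιp]
      _ = j ⟨_, hmemP⟩ := by rw [hι]; exact hΨ _
      _ = Φ (ι ⟨_, hmemP⟩) := (hspec _).symm
      _ = Φ (M • ff) := by rw [hιp]
      _ = M • Φ ff := map_nsmul Φ M ff
  exact hcanc M hM _ _ e1
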